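/- Let H be an n×n real symmetric positive definite matrix and let k > 0. Then there exists K* > 0 such that for every K > K* there exist positive constants k₃, k₄, k₅, k₆ with the following property: for all z, g ∈ ℝⁿ with z ≠ 0 and z ≠ g, −K·γ(z)·zᵀHz − k·γ(H⁻¹(z−g))·‖z−g‖² + 2k·γ(H⁻¹(z−g))·zᵀ(z−g) ≤ −k₃·‖z‖^{2−α₁} − k₅·‖z‖^{2−α₂} − k₄·‖z−g‖^{2−α₁} − k₆·‖z−g‖^{2−α₂}. -/

import Mathlib

open scoped InnerProductSpace

/-- The scaling factor `γ(w) = c₁‖w‖^{-α₁} + c₂‖w‖^{-α₂}` (Euclidean norm, real powers). -/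
noncomputable def gammaFun {n : ℕ} (c₁ c₂ α₁ α₂ : ℝ) (w : EuclideanSpace ℝ (Fin n)) : ℝ :=
  c₁ * ‖w‖ ^ (-α₁) + c₂ * ‖w‖ ^ (-α₂)

/-- Matrix-vector multiplication viewed as a map on Euclidean space. -/
noncomputable def mulVecE {n : ℕ} (H : Matrix (Fin n) (Fin n) ℝ)
    (w : EuclideanSpace ℝ (Fin n)) : EuclideanSpace ℝ (Fin n) :=
  (EuclideanSpace.equiv (Fin n) ℝ).symm (H.mulVec (EuclideanSpace.equiv (Fin n) ℝ w))

lemma mulVecE_smul {n : ℕ} (A : Matrix (Fin n) (Fin n) ℝ) (c : ℝ) (w : EuclideanSpace ℝ (Fin n)) :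
    mulVecE A (c • w) = c • mulVecE A w :=
  map_smul (Matrix.toEuclideanLin A) c w

lemma mulVecE_bound {n : ℕ} (A : Matrix (Fin n) (Fin n) ℝ) :
    ∃ M > (0:ℝ), ∀ w, ‖mulVecE A w‖ ≤ M * ‖w‖ := by
  have h : ∀ w, mulVecE A w = (Matrix.toEuclideanLin A).toContinuousLinearMap w := fun w => rfl
  refine ⟨‖(Matrix.toEuclideanLin A).toContinuousLinearMap‖ + 1, by positivity, fun w => ?_⟩
  rw [h]
  calc ‖(Matrix.toEuclideanLin A).toContinuousLinearMap w‖
      ≤ ‖(Matrix.toEuclideanLin A).toContinuousLinearMap‖ * ‖w‖ :=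
        (Matrix.toEuclideanLin A).toContinuousLinearMap.le_opNorm w
    _ ≤ _ := by nlinarith [norm_nonneg w]

lemma quad_lower {n : ℕ} (hn : 0 < n) (H : Matrix (Fin n) (Fin n) ℝ) (hH : H.PosDef) :
    ∃ μ > (0:ℝ), ∀ z : EuclideanSpace ℝ (Fin n), μ * ‖z‖^2 ≤ ⟪z, mulVecE H z⟫_ℝ := by
  have hpos : ∀ z : EuclideanSpace ℝ (Fin n), z ≠ 0 → 0 < ⟪z, mulVecE H z⟫_ℝ := by
    intro z hz
    have := hH.dotProduct_mulVec_pos (x := (EuclideanSpace.equiv (Fin n) ℝ) z) (by simpa using hz)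
    rw [dotProduct_comm] at this
    simp [mulVecE, EuclideanSpace.inner_eq_star_dotProduct]
    exact this
  haveI : Nonempty (Fin n) := ⟨⟨0, hn⟩⟩
  have hsph : (Metric.sphere (0:EuclideanSpace ℝ (Fin n)) 1).Nonempty :=
    NormedSpace.sphere_nonempty.2 zero_le_one
  have hcont : Continuous fun z : EuclideanSpace ℝ (Fin n) => ⟪z, mulVecE H z⟫_ℝ := by
    have h2 : Continuous fun z : EuclideanSpace ℝ (Fin n) => mulVecE H z :=
      (Matrix.toEuclideanLin H).toContinuousLinearMap.continuous
    exact continuous_inner.comp (continuous_id.prodMk h2)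
  obtain ⟨z₀, hz₀s, hz₀min⟩ := (isCompact_sphere (0:EuclideanSpace ℝ (Fin n)) 1).exists_isMinOn
    hsph hcont.continuousOn
  have hz₀1 : ‖z₀‖ = 1 := by simpa using hz₀s
  have hz₀ne : z₀ ≠ 0 := by intro h; rw [h] at hz₀1; simp at hz₀1
  refine ⟨⟪z₀, mulVecE H z₀⟫_ℝ, hpos z₀ hz₀ne, fun z => ?_⟩
  rcases eq_or_ne z 0 with rfl | hz
  · simp
  · have hnz : (0:ℝ) < ‖z‖ := norm_pos_iff.2 hz
    set u : EuclideanSpace ℝ (Fin n) := ‖z‖⁻¹ • z with hu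
    have hun : ‖u‖ = 1 := by
      rw [hu, norm_smul]; simp [abs_of_pos (inv_pos.2 hnz), inv_mul_cancel₀ hnz.ne']
    have hmin := hz₀min (by simpa using hun)
    have hzu : z = ‖z‖ • u := by rw [hu, smul_smul, mul_inv_cancel₀ hnz.ne', one_smul]
    have hexp : ⟪z, mulVecE H z⟫_ℝ = ‖z‖^2 * ⟪u, mulVecE H u⟫_ℝ := by
      conv_lhs => rw [hzu]
      rw [mulVecE_smul, real_inner_smul_left, real_inner_smul_right]
      ring
    rw [hexp]
    have : ⟪z₀, mulVecE H z₀⟫_ℝ ≤ ⟪u, mulVecE H u⟫_ℝ := hmin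
    nlinarith [sq_nonneg ‖z‖]

lemma aux_young (α t a b : ℝ) (hα : α < 1) (ht : 0 < t) (ha : 0 ≤ a) (hb : 0 ≤ b) :
    a ^ (1-α) * b ≤ t^(2-α) * a^(2-α) + t^(-((1-α)*(2-α))) * b^(2-α) := by
  have h1α : (0:ℝ) < 1 - α := by linarith
  have h2α : (0:ℝ) < 2 - α := by linarith
  have key : ∀ A B : ℝ, 0 ≤ A → 0 ≤ B → A ^ (1-α) * B ≤ A^(2-α) + B^(2-α) := by
    intro A B hA hB
    rcases eq_or_lt_of_le hB with rfl | hB0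
    · rw [mul_zero]; positivity
    rcases eq_or_lt_of_le hA with rfl | hA0
    · rw [Real.zero_rpow h1α.ne']
      have : B ^ (2-α) = B^(1-α) * B := by
        rw [show (2-α) = (1-α)+1 by ring, Real.rpow_add hB0, Real.rpow_one]
      nlinarith [Real.rpow_nonneg (le_refl (0:ℝ)) (2-α), Real.rpow_nonneg hB (1-α)]
    have eB : B ^ (2-α) = B^(1-α) * B := by
      rw [show (2-α) = (1-α)+1 by ring, Real.rpow_add hB0, Real.rpow_one]
    have eA : A ^ (2-α) = A^(1-α) * A := by
      rw [show (2-α) = (1-α)+1 by ring, Real.rpow_add hA0, Real.rpow_one]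
    rcases le_total A B with h | h
    · have : A ^ (1-α) * B ≤ B ^ (1-α) * B :=
        mul_le_mul_of_nonneg_right (Real.rpow_le_rpow hA h h1α.le) hB
      nlinarith [Real.rpow_nonneg hA (2-α)]
    · have : A ^ (1-α) * B ≤ A ^ (1-α) * A :=
        mul_le_mul_of_nonneg_left h (Real.rpow_nonneg hA _)
      nlinarith [Real.rpow_nonneg hB (2-α)]
  have h := key (t*a) (b / t^(1-α)) (by positivity) (by positivity)
  have e1 : (t*a)^(1-α) * (b / t^(1-α)) = a^(1-α) * b := by
    rw [Real.mul_rpow ht.le ha]; field_simp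
  have e2 : (t*a)^(2-α) = t^(2-α) * a^(2-α) := Real.mul_rpow ht.le ha
  have e3 : (b / t^(1-α))^(2-α) = t^(-((1-α)*(2-α))) * b^(2-α) := by
    rw [Real.div_rpow hb (by positivity), ← Real.rpow_mul ht.le, Real.rpow_neg ht.le,
      div_eq_mul_inv, mul_comm]
  rw [e1, e2, e3] at h
  exact h

lemma solve_t (C ε e : ℝ) (hC : 0 < C) (hε : 0 < ε) (he : 0 < e) :
    ∃ t > (0:ℝ), C * t ^ e = ε := by
  refine ⟨(ε/C) ^ e⁻¹, Real.rpow_pos_of_pos (by positivity) _, ?_⟩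
  rw [Real.rpow_inv_rpow (by positivity) he.ne']
  field_simp

set_option maxHeartbeats 1000000 in
theorem stmt8 (n : ℕ) (c₁ c₂ q₁ q₂ α₁ α₂ : ℝ)
    (hc₁ : 0 < c₁) (hc₂ : 0 < c₂)
    (hq₁ : 2 < q₁) (hq₂₁ : 1 < q₂) (hq₂₂ : q₂ < 2)
    (hα₁ : α₁ = (q₁ - 2) / (q₁ - 1)) (hα₂ : α₂ = (q₂ - 2) / (q₂ - 1))
    (H : Matrix (Fin n) (Fin n) ℝ) (hH : H.PosDef) (hHsymm : H.IsSymm)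
    (k : ℝ) (hk : 0 < k) :
    ∃ Kstar > (0 : ℝ), ∀ K > Kstar,
      ∃ k₃ > (0 : ℝ), ∃ k₄ > (0 : ℝ), ∃ k₅ > (0 : ℝ), ∃ k₆ > (0 : ℝ),
        ∀ z g : EuclideanSpace ℝ (Fin n), z ≠ 0 → z ≠ g →
          -K * gammaFun c₁ c₂ α₁ α₂ z * ⟪z, mulVecE H z⟫_ℝ
              - k * gammaFun c₁ c₂ α₁ α₂ (mulVecE H⁻¹ (z - g)) * ‖z - g‖ ^ 2
              + 2 * k * gammaFun c₁ c₂ α₁ α₂ (mulVecE H⁻¹ (z - g)) * ⟪z, z - g⟫_ℝ ≤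
            -k₃ * ‖z‖ ^ (2 - α₁) - k₅ * ‖z‖ ^ (2 - α₂)
              - k₄ * ‖z - g‖ ^ (2 - α₁) - k₆ * ‖z - g‖ ^ (2 - α₂) := by
  -- trivial case n = 0
  rcases Nat.eq_zero_or_pos n with rfl | hn
  · refine ⟨1, one_pos, fun K _ => ⟨1, one_pos, 1, one_pos, 1, one_pos, 1, one_pos,
      fun z g hz _ => absurd (Subsingleton.elim z 0) hz⟩⟩
  -- exponent facts
  have hα₁0 : 0 < α₁ := by
    rw [hα₁]; apply div_pos <;> linarith
  have hα₁1 : α₁ < 1 := by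
    rw [hα₁, div_lt_one (by linarith)]; linarith
  have hα₂0 : α₂ < 0 := by
    rw [hα₂]; apply div_neg_of_neg_of_pos <;> linarith
  -- operator bounds
  obtain ⟨μ, hμ0, hμ⟩ := quad_lower hn H hH
  obtain ⟨M, hM0, hM⟩ := mulVecE_bound (n := n) H⁻¹
  obtain ⟨MH, hMH0, hMH⟩ := mulVecE_bound (n := n) H
  obtain ⟨m, hm0, hm⟩ : ∃ m > (0:ℝ), ∀ w : EuclideanSpace ℝ (Fin n),
      m * ‖w‖ ≤ ‖mulVecE H⁻¹ w‖ := by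
    refine ⟨MH⁻¹, inv_pos.2 hMH0, fun w => ?_⟩
    have hinv : mulVecE H (mulVecE H⁻¹ w) = w := by
      show WithLp.toLp 2 (H.mulVec (H⁻¹.mulVec (WithLp.ofLp w))) = w
      simp [mulVecE, Matrix.mulVec_mulVec,
        Matrix.mul_nonsing_inv H (isUnit_iff_ne_zero.2 hH.det_pos.ne')]
    have h1 := hMH (mulVecE H⁻¹ w)
    rw [hinv] at h1
    rw [inv_mul_le_iff₀ hMH0]
    exact h1
  -- positive coefficient combos
  have hma1 : (0:ℝ) < m ^ (-α₁) := Real.rpow_pos_of_pos hm0 _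
  have hMa1 : (0:ℝ) < M ^ (-α₁) := Real.rpow_pos_of_pos hM0 _
  have hma2 : (0:ℝ) < m ^ (-α₂) := Real.rpow_pos_of_pos hm0 _
  have hMa2 : (0:ℝ) < M ^ (-α₂) := Real.rpow_pos_of_pos hM0 _
  -- choose t₁, t₂
  obtain ⟨t₁, ht₁0, ht₁⟩ := solve_t (2*k*c₁*m^(-α₁)) ((k/2)*c₁*M^(-α₁)) (2-α₁)
    (by positivity) (by positivity) (by linarith)
  obtain ⟨t₂, ht₂0, ht₂⟩ := solve_t (2*k*c₂*M^(-α₂)) ((k/2)*c₂*m^(-α₂)) (2-α₂)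
    (by positivity) (by positivity) (by linarith)
  set A₁ : ℝ := 2*k*c₁*m^(-α₁) * t₁^(-((1-α₁)*(2-α₁))) with hA₁def
  set A₂ : ℝ := 2*k*c₂*M^(-α₂) * t₂^(-((1-α₂)*(2-α₂))) with hA₂def
  have hA₁0 : 0 < A₁ := by rw [hA₁def]; positivity
  have hA₂0 : 0 < A₂ := by rw [hA₂def]; positivity
  refine ⟨max 1 (max (A₁/(μ*c₁)) (A₂/(μ*c₂))), lt_of_lt_of_le one_pos (le_max_left _ _),
    fun K hK => ?_⟩
  have hK0 : (0:ℝ) < K := lt_of_lt_of_le one_pos ((le_max_left _ _).trans hK.le)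
  have hk₃ : 0 < K*(μ*c₁) - A₁ := by
    have h1 : A₁/(μ*c₁) < K := lt_of_le_of_lt ((le_max_left _ _).trans (le_max_right _ _)) hK
    rw [div_lt_iff₀ (by positivity)] at h1
    nlinarith
  have hk₅ : 0 < K*(μ*c₂) - A₂ := by
    have h1 : A₂/(μ*c₂) < K := lt_of_le_of_lt ((le_max_right _ _).trans (le_max_right _ _)) hK
    rw [div_lt_iff₀ (by positivity)] at h1
    nlinarith
  refine ⟨K*(μ*c₁) - A₁, hk₃, (k/2)*c₁*M^(-α₁), by positivity,
    K*(μ*c₂) - A₂, hk₅, (k/2)*c₂*m^(-α₂), by positivity, fun z g hz hzg => ?_⟩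
  have hS : (0:ℝ) < ‖z‖ := norm_pos_iff.2 hz
  have hwne : z - g ≠ 0 := sub_ne_zero.2 hzg
  have hR : (0:ℝ) < ‖z - g‖ := norm_pos_iff.2 hwne
  set S := ‖z‖ with hSdef
  set R := ‖z - g‖ with hRdef
  set v := mulVecE H⁻¹ (z - g) with hvdef
  set V := ‖v‖ with hVdef
  have hVle : V ≤ M * R := hM _
  have hVge : m * R ≤ V := hm _
  have hV0 : (0:ℝ) < V := lt_of_lt_of_le (by positivity) hVge
  -- rpow helpers
  have hpowR : ∀ β : ℝ, R ^ (-β) * R ^ 2 = R ^ (2 - β) := by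
    intro β
    rw [← Real.rpow_natCast R 2, ← Real.rpow_add hR]
    congr 1
    push_cast; ring
  have hpowS : ∀ β : ℝ, S ^ (-β) * S ^ 2 = S ^ (2 - β) := by
    intro β
    rw [← Real.rpow_natCast S 2, ← Real.rpow_add hS]
    congr 1
    push_cast; ring
  have hpowR1 : ∀ β : ℝ, R ^ (-β) * R = R ^ (1 - β) := by
    intro β
    nth_rewrite 2 [← Real.rpow_one R]
    rw [← Real.rpow_add hR]
    congr 1
    ring
  -- bounds on gammaFun of v
  have hγv_low : c₁ * (M^(-α₁) * R^(-α₁)) + c₂ * (m^(-α₂) * R^(-α₂))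
      ≤ gammaFun c₁ c₂ α₁ α₂ v := by
    have h1 : (M*R)^(-α₁) ≤ V^(-α₁) :=
      Real.rpow_le_rpow_of_nonpos hV0 hVle (by linarith)
    have h2 : (m*R)^(-α₂) ≤ V^(-α₂) :=
      Real.rpow_le_rpow (by positivity) hVge (by linarith)
    rw [Real.mul_rpow hM0.le hR.le] at h1
    rw [Real.mul_rpow hm0.le hR.le] at h2
    have l1 := mul_le_mul_of_nonneg_left h1 hc₁.le
    have l2 := mul_le_mul_of_nonneg_left h2 hc₂.le
    unfold gammaFun
    rw [← hVdef]
    linarith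
  have hγv_up : gammaFun c₁ c₂ α₁ α₂ v ≤ c₁ * (m^(-α₁) * R^(-α₁)) + c₂ * (M^(-α₂) * R^(-α₂)) := by
    have h1 : V^(-α₁) ≤ (m*R)^(-α₁) :=
      Real.rpow_le_rpow_of_nonpos (by positivity) hVge (by linarith)
    have h2 : V^(-α₂) ≤ (M*R)^(-α₂) :=
      Real.rpow_le_rpow hV0.le hVle (by linarith)
    rw [Real.mul_rpow hm0.le hR.le] at h1
    rw [Real.mul_rpow hM0.le hR.le] at h2
    have l1 := mul_le_mul_of_nonneg_left h1 hc₁.le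
    have l2 := mul_le_mul_of_nonneg_left h2 hc₂.le
    unfold gammaFun
    rw [← hVdef]
    linarith
  have hγv_pos : 0 < gammaFun c₁ c₂ α₁ α₂ v := by
    unfold gammaFun
    rw [← hVdef]
    exact add_pos (mul_pos hc₁ (Real.rpow_pos_of_pos hV0 _))
      (mul_pos hc₂ (Real.rpow_pos_of_pos hV0 _))
  -- z-part bound
  have Hz : K*(μ*c₁)*S^(2-α₁) + K*(μ*c₂)*S^(2-α₂)
      ≤ K * (gammaFun c₁ c₂ α₁ α₂ z * ⟪z, mulVecE H z⟫_ℝ) := by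
    have hq := hμ z
    have hγz_pos : 0 < gammaFun c₁ c₂ α₁ α₂ z := by
      unfold gammaFun
      rw [← hSdef]
      exact add_pos (mul_pos hc₁ (Real.rpow_pos_of_pos hS _))
        (mul_pos hc₂ (Real.rpow_pos_of_pos hS _))
    have step : gammaFun c₁ c₂ α₁ α₂ z * (μ * S^2)
        ≤ gammaFun c₁ c₂ α₁ α₂ z * ⟪z, mulVecE H z⟫_ℝ :=
      mul_le_mul_of_nonneg_left hq hγz_pos.le
    have expand : gammaFun c₁ c₂ α₁ α₂ z * (μ * S^2)
        = (μ*c₁)*(S^(-α₁) * S^2) + (μ*c₂)*(S^(-α₂) * S^2) := by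
      unfold gammaFun
      rw [← hSdef]
      ring
    rw [expand, hpowS α₁, hpowS α₂] at step
    have := mul_le_mul_of_nonneg_left step hK0.le
    linarith
  -- R quadratic part
  have HR : k*(c₁*M^(-α₁))*R^(2-α₁) + k*(c₂*m^(-α₂))*R^(2-α₂)
      ≤ k * (gammaFun c₁ c₂ α₁ α₂ v * R^2) := by
    have step := mul_le_mul_of_nonneg_right hγv_low (by positivity : (0:ℝ) ≤ R^2)
    have expand : (c₁ * (M^(-α₁) * R^(-α₁)) + c₂ * (m^(-α₂) * R^(-α₂))) * R^2
        = (c₁*M^(-α₁))*(R^(-α₁) * R^2) + (c₂*m^(-α₂))*(R^(-α₂) * R^2) := by ring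
    rw [expand, hpowR α₁, hpowR α₂] at step
    have := mul_le_mul_of_nonneg_left step hk.le
    linarith
  -- cross term
  have Hcross : 2*k*(gammaFun c₁ c₂ α₁ α₂ v * ⟪z, z - g⟫_ℝ)
      ≤ (k/2)*c₁*M^(-α₁)*R^(2-α₁) + A₁*S^(2-α₁)
        + (k/2)*c₂*m^(-α₂)*R^(2-α₂) + A₂*S^(2-α₂) := by
    have hinner : ⟪z, z - g⟫_ℝ ≤ S * R := real_inner_le_norm z (z - g)
    have s1 : gammaFun c₁ c₂ α₁ α₂ v * ⟪z, z - g⟫_ℝ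
        ≤ gammaFun c₁ c₂ α₁ α₂ v * (S * R) :=
      mul_le_mul_of_nonneg_left hinner hγv_pos.le
    have s2 : gammaFun c₁ c₂ α₁ α₂ v * (S * R)
        ≤ (c₁ * (m^(-α₁) * R^(-α₁)) + c₂ * (M^(-α₂) * R^(-α₂))) * (S * R) :=
      mul_le_mul_of_nonneg_right hγv_up (by positivity)
    have expand : (c₁ * (m^(-α₁) * R^(-α₁)) + c₂ * (M^(-α₂) * R^(-α₂))) * (S * R)
        = (c₁*m^(-α₁))*((R^(-α₁) * R)*S) + (c₂*M^(-α₂))*((R^(-α₂) * R)*S) := by ring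
    rw [expand, hpowR1 α₁, hpowR1 α₂] at s2
    have hy1 := aux_young α₁ t₁ R S hα₁1 ht₁0 hR.le hS.le
    have hy2 := aux_young α₂ t₂ R S (by linarith) ht₂0 hR.le hS.le
    have hy1' : 2*k*c₁*m^(-α₁)*(R^(1-α₁)*S)
        ≤ (k/2)*c₁*M^(-α₁)*R^(2-α₁) + A₁*S^(2-α₁) := by
      calc 2*k*c₁*m^(-α₁)*(R^(1-α₁)*S)
          ≤ 2*k*c₁*m^(-α₁)*(t₁^(2-α₁) * R^(2-α₁) + t₁^(-((1-α₁)*(2-α₁))) * S^(2-α₁)) :=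
            mul_le_mul_of_nonneg_left hy1 (by positivity)
        _ = (2*k*c₁*m^(-α₁)*t₁^(2-α₁))*R^(2-α₁) + A₁*S^(2-α₁) := by rw [hA₁def]; ring
        _ = (k/2)*c₁*M^(-α₁)*R^(2-α₁) + A₁*S^(2-α₁) := by rw [ht₁]
    have hy2' : 2*k*c₂*M^(-α₂)*(R^(1-α₂)*S)
        ≤ (k/2)*c₂*m^(-α₂)*R^(2-α₂) + A₂*S^(2-α₂) := by
      calc 2*k*c₂*M^(-α₂)*(R^(1-α₂)*S)
          ≤ 2*k*c₂*M^(-α₂)*(t₂^(2-α₂) * R^(2-α₂) + t₂^(-((1-α₂)*(2-α₂))) * S^(2-α₂)) :=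
            mul_le_mul_of_nonneg_left hy2 (by positivity)
        _ = (2*k*c₂*M^(-α₂)*t₂^(2-α₂))*R^(2-α₂) + A₂*S^(2-α₂) := by rw [hA₂def]; ring
        _ = (k/2)*c₂*m^(-α₂)*R^(2-α₂) + A₂*S^(2-α₂) := by rw [ht₂]
    have chain := mul_le_mul_of_nonneg_left (s1.trans s2) (by positivity : (0:ℝ) ≤ 2*k)
    linarith
  linarith [Hz, HR, Hcross]
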